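/- The zero-energy infinity manifold M = {(y,s,w) ∈ ℝ × (−1,1) × ℝ : G(y,s,w) = 0}, where G(y,s,w) = (1−s²)^a (Ũ(s) − y²/2) − w²/2, is invariant under the regularized reduced zero-energy system: there is a continuous function c(y,s,w) such that ∇G·F = c·G identically (F the vector field of the system), and hence every solution with G = 0 at some time has G ≡ 0 on its whole interval of existence. Moreover, along every solution contained in M one has y'(σ) = −(a/2 − 1) w(σ)² ≤ 0, so y is non-increasing along the flow on the infinity manifold. -/

import Mathlib

open Real

private lemma key_identity (a b lam : ℝ) (hlam : lam ≠ 0)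
    (y s w U0 U1 V0 V1 : ℝ) (hs : 0 < 1 - s ^ 2) (hV : V0 ≠ 0) :
    (-((1 - s ^ 2) ^ a * y)) *
        (-(b / 2 - 1) * w ^ 2 + (b - a) * (1 - s ^ 2) ^ a * (U0 - y ^ 2 / 2))
      + ((-(2 * s)) * a * (1 - s ^ 2) ^ (a - 1) * (U0 - y ^ 2 / 2)
          + (1 - s ^ 2) ^ a * U1) * ((1 / lam) * (1 - s ^ 2) ^ (a / 2) * w)
      + (-w) *
        ((a / 2 - 1) * (1 - s ^ 2) ^ a * y * w
          + (1 / (2 * lam)) * (1 - s ^ 2) ^ (a / 2 - 1)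
              * ((1 - s ^ 2) * V1 / V0 - 2 * a * s) * w ^ 2
          + (1 / lam) * (1 - s ^ 2) ^ (3 * a / 2)
              * (U1 - (V1 / V0) * (U0 - y ^ 2 / 2)))
    = (-(b - a) * y * (1 - s ^ 2) ^ a + (1 / lam) * (V1 / V0) * w * (1 - s ^ 2) ^ (a / 2)
        - (2 * a * s / lam) * w * (1 - s ^ 2) ^ (a / 2 - 1))
      * ((1 - s ^ 2) ^ a * (U0 - y ^ 2 / 2) - w ^ 2 / 2) := by
  have e1 : (1 - s ^ 2) ^ (a / 2) = (1 - s ^ 2) ^ (a / 2 - 1) * (1 - s ^ 2) := by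
    nth_rewrite 3 [← Real.rpow_one (1 - s ^ 2)]
    rw [← Real.rpow_add hs]; congr 1; ring
  have e2 : (1 - s ^ 2) ^ a = ((1 - s ^ 2) ^ (a / 2 - 1)) ^ 2 * (1 - s ^ 2) ^ 2 := by
    rw [← Real.rpow_natCast ((1 - s ^ 2) ^ (a / 2 - 1)) 2, ← Real.rpow_mul hs.le,
      ← Real.rpow_natCast (1 - s ^ 2) 2, ← Real.rpow_add hs]
    congr 1; push_cast; ring
  have e3 : (1 - s ^ 2) ^ (a - 1) = ((1 - s ^ 2) ^ (a / 2 - 1)) ^ 2 * (1 - s ^ 2) := by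
    rw [← Real.rpow_natCast ((1 - s ^ 2) ^ (a / 2 - 1)) 2, ← Real.rpow_mul hs.le]
    nth_rewrite 3 [← Real.rpow_one (1 - s ^ 2)]
    rw [← Real.rpow_add hs]; congr 1; ring
  have e4 : (1 - s ^ 2) ^ (3 * a / 2)
      = ((1 - s ^ 2) ^ (a / 2 - 1)) ^ 3 * (1 - s ^ 2) ^ 3 := by
    rw [← Real.rpow_natCast ((1 - s ^ 2) ^ (a / 2 - 1)) 3, ← Real.rpow_mul hs.le,
      ← Real.rpow_natCast (1 - s ^ 2) 3, ← Real.rpow_add hs]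
    congr 1; push_cast; ring
  rw [e2, e1, e3, e4]
  field_simp
  ring

/-- Grönwall: if `g' = C·g` on `[α,β]`, `C` bounded, `g α = 0`, then `g ≡ 0`. -/
private lemma gron_zero (g C : ℝ → ℝ) (α β K : ℝ)
    (hg : ∀ t ∈ Set.Icc α β, HasDerivAt g (C t * g t) t)
    (hK : ∀ t ∈ Set.Icc α β, |C t| ≤ K)
    (h0 : g α = 0) : ∀ t ∈ Set.Icc α β, g t = 0 := by
  intro t ht
  have hcont : ContinuousOn g (Set.Icc α β) :=
    fun x hx => ((hg x hx).continuousAt).continuousWithinAt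
  have hb := norm_le_gronwallBound_of_norm_deriv_right_le (f := g)
    (f' := fun x => C x * g x) (δ := 0) (K := K) (ε := 0) hcont
    (fun x hx => (hg x (Set.Ico_subset_Icc_self hx)).hasDerivWithinAt)
    (by simp [h0])
    (fun x hx => by
      rw [norm_mul, add_zero, Real.norm_eq_abs]
      exact mul_le_mul_of_nonneg_right (hK x (Set.Ico_subset_Icc_self hx)) (norm_nonneg _))
    t ht
  rw [gronwallBound_ε0_δ0] at hb
  exact norm_le_zero_iff.mp hb

private lemma gron_zero' (g C : ℝ → ℝ) (α β K : ℝ)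
    (hg : ∀ t ∈ Set.Icc α β, HasDerivAt g (C t * g t) t)
    (hK : ∀ t ∈ Set.Icc α β, |C t| ≤ K)
    (h0 : g β = 0) : ∀ t ∈ Set.Icc α β, g t = 0 := by
  intro t ht
  have hkey := gron_zero (fun u => g (α + β - u)) (fun u => -C (α + β - u)) α β K
    (by
      intro u hu
      have hmem : α + β - u ∈ Set.Icc α β := ⟨by linarith [hu.2], by linarith [hu.1]⟩
      have h1 : HasDerivAt (fun u' : ℝ => α + β - u') (-1) u :=
        (hasDerivAt_id u).const_sub (α + β)
      have h2 := (hg _ hmem).comp u h1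
      have h3 : (fun u' => -C (α + β - u')) u * (fun u' => g (α + β - u')) u
          = C (α + β - u) * g (α + β - u) * (-1) := by ring
      rw [h3]
      exact h2)
    (by
      intro u hu
      have hmem : α + β - u ∈ Set.Icc α β := ⟨by linarith [hu.2], by linarith [hu.1]⟩
      simpa [abs_neg] using hK _ hmem)
    (by simpa using h0)
  have htt : α + β - t ∈ Set.Icc α β := ⟨by linarith [ht.2], by linarith [ht.1]⟩
  have := hkey (α + β - t) htt
  simpa [show α + β - (α + β - t) = t by ring] using this

/-- The zero-energy infinity manifold
`M = {G = 0}`, `G(y,s,w) = (1−s²)^a(Ũ(s) − y²/2) − w²/2`, is invariant: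
`∇G·F = c·G` for a continuous `c`, every solution with `G = 0` at some time has
`G ≡ 0`, and on `M` one has `y' = −(a/2 − 1)w² ≤ 0`. -/
theorem infinity_manifold_invariant_zero_energy
    (a b : ℝ) (ha : 4 < a) (hab : a < b - 1)
    (lam : ℝ) (hlam : lam ∈ Set.Ioo 0 (Real.pi / 4))
    (U V : ℝ → ℝ)
    (hUpos : ∀ s ∈ Set.Ioo (-1 : ℝ) 1, 0 < U s)
    (hVpos : ∀ s ∈ Set.Ioo (-1 : ℝ) 1, 0 < V s)
    (hU2 : ContDiffOn ℝ 2 U (Set.Ioo (-1 : ℝ) 1))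
    (hV2 : ContDiffOn ℝ 2 V (Set.Ioo (-1 : ℝ) 1))
    (F1 F2 F3 : ℝ → ℝ → ℝ → ℝ)
    (hF1 : ∀ y s w : ℝ, F1 y s w =
      -(b / 2 - 1) * w ^ 2 + (b - a) * (1 - s ^ 2) ^ a * (U s - y ^ 2 / 2))
    (hF2 : ∀ y s w : ℝ, F2 y s w = (1 / lam) * (1 - s ^ 2) ^ (a / 2) * w)
    (hF3 : ∀ y s w : ℝ, F3 y s w =
      (a / 2 - 1) * (1 - s ^ 2) ^ a * y * w
      + (1 / (2 * lam)) * (1 - s ^ 2) ^ (a / 2 - 1)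
          * ((1 - s ^ 2) * deriv V s / V s - 2 * a * s) * w ^ 2
      + (1 / lam) * (1 - s ^ 2) ^ (3 * a / 2)
          * (deriv U s - (deriv V s / V s) * (U s - y ^ 2 / 2)))
    (G : ℝ → ℝ → ℝ → ℝ)
    (hG : ∀ y s w : ℝ, G y s w = (1 - s ^ 2) ^ a * (U s - y ^ 2 / 2) - w ^ 2 / 2) :
    (∃ c : ℝ → ℝ → ℝ → ℝ,
      ContinuousOn (fun p : ℝ × ℝ × ℝ => c p.1 p.2.1 p.2.2)
        (Set.univ ×ˢ Set.Ioo (-1 : ℝ) 1 ×ˢ Set.univ) ∧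
      ∀ y w : ℝ, ∀ s ∈ Set.Ioo (-1 : ℝ) 1,
        deriv (fun y' => G y' s w) y * F1 y s w
          + deriv (fun s' => G y s' w) s * F2 y s w
          + deriv (fun w' => G y s w') w * F3 y s w
        = c y s w * G y s w) ∧
    (∀ (I : Set ℝ), I.OrdConnected → ∀ y s w : ℝ → ℝ,
      (∀ σ ∈ I, s σ ∈ Set.Ioo (-1 : ℝ) 1) →
      (∀ σ ∈ I, HasDerivAt y (F1 (y σ) (s σ) (w σ)) σ) →
      (∀ σ ∈ I, HasDerivAt s (F2 (y σ) (s σ) (w σ)) σ) →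
      (∀ σ ∈ I, HasDerivAt w (F3 (y σ) (s σ) (w σ)) σ) →
      ∀ σ₀ ∈ I, G (y σ₀) (s σ₀) (w σ₀) = 0 →
        ∀ σ ∈ I, G (y σ) (s σ) (w σ) = 0) ∧
    (∀ y w : ℝ, ∀ s ∈ Set.Ioo (-1 : ℝ) 1, G y s w = 0 →
      F1 y s w = -(a / 2 - 1) * w ^ 2 ∧ F1 y s w ≤ 0) := by
  have hlam0 : lam ≠ 0 := ne_of_gt hlam.1
  have hpos : ∀ s : ℝ, s ∈ Set.Ioo (-1 : ℝ) 1 → 0 < 1 - s ^ 2 := by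
    intro s hs; nlinarith [hs.1, hs.2]
  have hdV : ContinuousOn (deriv V) (Set.Ioo (-1 : ℝ) 1) :=
    hV2.continuousOn_deriv_of_isOpen isOpen_Ioo (by norm_num)
  -- the multiplier c
  set c : ℝ → ℝ → ℝ → ℝ := fun y s w =>
    -(b - a) * y * (1 - s ^ 2) ^ a
      + (1 / lam) * (deriv V s / V s) * w * (1 - s ^ 2) ^ (a / 2)
      - (2 * a * s / lam) * w * (1 - s ^ 2) ^ (a / 2 - 1) with hc
  refine ⟨⟨c, ?_, ?_⟩, ?_, ?_⟩
  · -- continuity of c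
    have hs1 : ContinuousOn (fun p : ℝ × ℝ × ℝ => p.2.1)
        (Set.univ ×ˢ Set.Ioo (-1 : ℝ) 1 ×ˢ Set.univ) :=
      (continuous_fst.comp continuous_snd).continuousOn
    have hy1 : ContinuousOn (fun p : ℝ × ℝ × ℝ => p.1)
        (Set.univ ×ˢ Set.Ioo (-1 : ℝ) 1 ×ˢ Set.univ) := continuous_fst.continuousOn
    have hw1 : ContinuousOn (fun p : ℝ × ℝ × ℝ => p.2.2)
        (Set.univ ×ˢ Set.Ioo (-1 : ℝ) 1 ×ˢ Set.univ) :=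
      (continuous_snd.comp continuous_snd).continuousOn
    have hmem : ∀ p : ℝ × ℝ × ℝ, p ∈ Set.univ ×ˢ Set.Ioo (-1 : ℝ) 1 ×ˢ Set.univ →
        p.2.1 ∈ Set.Ioo (-1 : ℝ) 1 := fun p hp => hp.2.1
    have hbase : ContinuousOn (fun p : ℝ × ℝ × ℝ => 1 - p.2.1 ^ 2)
        (Set.univ ×ˢ Set.Ioo (-1 : ℝ) 1 ×ˢ Set.univ) :=
      (continuous_const.sub ((continuous_fst.comp continuous_snd).pow 2)).continuousOn
    have hne : ∀ p : ℝ × ℝ × ℝ, p ∈ Set.univ ×ˢ Set.Ioo (-1 : ℝ) 1 ×ˢ Set.univ →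
        (1 - p.2.1 ^ 2 : ℝ) ≠ 0 ∨ (0 : ℝ) ≤ a :=
      fun p hp => Or.inl (ne_of_gt (hpos _ (hmem p hp)))
    have hr1 : ContinuousOn (fun p : ℝ × ℝ × ℝ => (1 - p.2.1 ^ 2) ^ a)
        (Set.univ ×ˢ Set.Ioo (-1 : ℝ) 1 ×ˢ Set.univ) := hbase.rpow_const hne
    have hr2 : ContinuousOn (fun p : ℝ × ℝ × ℝ => (1 - p.2.1 ^ 2) ^ (a / 2))
        (Set.univ ×ˢ Set.Ioo (-1 : ℝ) 1 ×ˢ Set.univ) :=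
      hbase.rpow_const (fun p hp => Or.inl (ne_of_gt (hpos _ (hmem p hp))))
    have hr3 : ContinuousOn (fun p : ℝ × ℝ × ℝ => (1 - p.2.1 ^ 2) ^ (a / 2 - 1))
        (Set.univ ×ˢ Set.Ioo (-1 : ℝ) 1 ×ˢ Set.univ) :=
      hbase.rpow_const (fun p hp => Or.inl (ne_of_gt (hpos _ (hmem p hp))))
    have hdv : ContinuousOn (fun p : ℝ × ℝ × ℝ => deriv V p.2.1)
        (Set.univ ×ˢ Set.Ioo (-1 : ℝ) 1 ×ˢ Set.univ) := hdV.comp hs1 hmem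
    have hvv : ContinuousOn (fun p : ℝ × ℝ × ℝ => V p.2.1)
        (Set.univ ×ˢ Set.Ioo (-1 : ℝ) 1 ×ˢ Set.univ) := hV2.continuousOn.comp hs1 hmem
    have hq : ContinuousOn (fun p : ℝ × ℝ × ℝ => deriv V p.2.1 / V p.2.1)
        (Set.univ ×ˢ Set.Ioo (-1 : ℝ) 1 ×ˢ Set.univ) :=
      hdv.div hvv (fun p hp => ne_of_gt (hVpos _ (hmem p hp)))
    simp only [hc]
    exact ((continuousOn_const.mul hy1).mul hr1).add
        (((continuousOn_const.mul hq).mul hw1).mul hr2) |>.sub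
      (((continuousOn_const.mul hs1).div_const lam).mul hw1 |>.mul hr3)
  · -- the Lie derivative identity
    intro y w s hsm
    have hs : 0 < 1 - s ^ 2 := hpos s hsm
    have hGy : deriv (fun y' => G y' s w) y = -((1 - s ^ 2) ^ a * y) := by
      have heq : (fun y' => G y' s w)
          = fun y' => (1 - s ^ 2) ^ a * (U s - y' ^ 2 / 2) - w ^ 2 / 2 :=
        funext fun y' => hG y' s w
      rw [heq]
      have hd := ((((hasDerivAt_pow 2 y).div_const 2).const_sub (U s)).const_mul
        ((1 - s ^ 2) ^ a)).sub_const (w ^ 2 / 2)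
      rw [hd.deriv]; push_cast; ring
    have hGw : deriv (fun w' => G y s w') w = -w := by
      have heq : (fun w' => G y s w')
          = fun w' => (1 - s ^ 2) ^ a * (U s - y ^ 2 / 2) - w' ^ 2 / 2 :=
        funext fun w' => hG y s w'
      rw [heq]
      have hd := (((hasDerivAt_pow 2 w).div_const 2).const_sub
        ((1 - s ^ 2) ^ a * (U s - y ^ 2 / 2)))
      rw [hd.deriv]; push_cast; ring
    have hU' : HasDerivAt U (deriv U s) s :=
      ((hU2.contDiffAt (isOpen_Ioo.mem_nhds hsm)).differentiableAt
        (by norm_num)).hasDerivAt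
    have hGs : deriv (fun s' => G y s' w) s
        = (-(2 * s)) * a * (1 - s ^ 2) ^ (a - 1) * (U s - y ^ 2 / 2)
          + (1 - s ^ 2) ^ a * deriv U s := by
      have heq : (fun s' => G y s' w)
          = fun s' => (1 - s' ^ 2) ^ a * (U s' - y ^ 2 / 2) - w ^ 2 / 2 :=
        funext fun s' => hG y s' w
      rw [heq]
      have hq : HasDerivAt (fun s' : ℝ => 1 - s' ^ 2) (-(2 * s)) s := by
        have h := (hasDerivAt_pow 2 s).const_sub 1
        have h2 : -(2 * s) = -(↑(2:ℕ) * s ^ (2 - 1)) := by push_cast; ring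
        rw [h2]; exact h
      have hr := hq.rpow_const (p := a) (Or.inl (ne_of_gt hs))
      have hd := (hr.mul (hU'.sub_const (y ^ 2 / 2))).sub_const (w ^ 2 / 2)
      exact hd.deriv
    rw [hGy, hGs, hGw, hF1, hF2, hF3, hG]
    exact key_identity a b lam hlam0 y s w (U s) (deriv U s) (V s) (deriv V s) hs
      (ne_of_gt (hVpos s hsm))
  · -- invariance along solutions
    intro I hI y s w hsr hy' hs' hw' σ₀ hσ₀ h0 σ hσ
    set g : ℝ → ℝ := fun t => G (y t) (s t) (w t) with hgdef
    have hgeq : ∀ t, g t = (1 - s t ^ 2) ^ a * (U (s t) - y t ^ 2 / 2) - w t ^ 2 / 2 :=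
      fun t => hG _ _ _
    set Cf : ℝ → ℝ := fun t => c (y t) (s t) (w t) with hCf
    have sqd : ∀ (f : ℝ → ℝ) (d t : ℝ), HasDerivAt f d t →
        HasDerivAt (fun u => (f u) ^ 2) (2 * f t * d) t := by
      intro f d t hf
      have h := hf.pow 2
      have h2 : 2 * f t * d = ↑(2:ℕ) * f t ^ (2 - 1) * d := by push_cast; ring
      rw [h2]; exact h
    have hderiv : ∀ t ∈ I, HasDerivAt g (Cf t * g t) t := by
      intro t ht
      have hsm := hsr t ht
      have hst : 0 < 1 - s t ^ 2 := hpos _ hsm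
      have hU' : HasDerivAt U (deriv U (s t)) (s t) :=
        ((hU2.contDiffAt (isOpen_Ioo.mem_nhds hsm)).differentiableAt
          (by norm_num)).hasDerivAt
      have hq : HasDerivAt (fun u => 1 - s u ^ 2)
          (-(2 * s t * F2 (y t) (s t) (w t))) t := by
        have h := (sqd s _ t (hs' t ht)).const_sub 1
        have h2 : -(2 * s t * F2 (y t) (s t) (w t))
            = -(2 * s t * F2 (y t) (s t) (w t)) := rfl
        exact h
      have hA := hq.rpow_const (p := a) (Or.inl (ne_of_gt hst))
      have hUc : HasDerivAt (fun u => U (s u))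
          (deriv U (s t) * F2 (y t) (s t) (w t)) t :=
        hU'.comp t (hs' t ht)
      have hinner := hUc.sub ((sqd y _ t (hy' t ht)).div_const 2)
      have hwpart := (sqd w _ t (hw' t ht)).div_const 2
      have hfull := (hA.mul hinner).sub hwpart
      have hfun : (fun u => (1 - s u ^ 2) ^ a * (U (s u) - y u ^ 2 / 2) - w u ^ 2 / 2)
          = g := funext fun u => (hgeq u).symm
      have hfull : HasDerivAt (fun u => (1 - s u ^ 2) ^ a * (U (s u) - y u ^ 2 / 2) - w u ^ 2 / 2) _ t := hfull
      rw [hfun] at hfull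
      have hval : -(2 * s t * F2 (y t) (s t) (w t)) * a * (1 - s t ^ 2) ^ (a - 1)
              * (U (s t) - y t ^ 2 / 2)
            + (1 - s t ^ 2) ^ a
              * (deriv U (s t) * F2 (y t) (s t) (w t)
                  - 2 * y t * F1 (y t) (s t) (w t) / 2)
            - 2 * w t * F3 (y t) (s t) (w t) / 2
          = Cf t * g t := by
        rw [hCf, hgeq, hF1, hF2, hF3, hc]
        linear_combination key_identity a b lam hlam0 (y t) (s t) (w t) (U (s t))
          (deriv U (s t)) (V (s t)) (deriv V (s t)) hst (ne_of_gt (hVpos _ hsm))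
      rw [← hval]
      exact hfull
    have hCcont : ∀ t ∈ I, ContinuousAt Cf t := by
      intro t ht
      have hsm := hsr t ht
      have hst : 0 < 1 - s t ^ 2 := hpos _ hsm
      have hyc : ContinuousAt y t := (hy' t ht).continuousAt
      have hsc : ContinuousAt s t := (hs' t ht).continuousAt
      have hwc : ContinuousAt w t := (hw' t ht).continuousAt
      have hbase : ContinuousAt (fun u => 1 - s u ^ 2) t :=
        continuousAt_const.sub (hsc.pow 2)
      have hr1 : ContinuousAt (fun u => (1 - s u ^ 2) ^ a) t :=
        hbase.rpow_const (Or.inl (ne_of_gt hst))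
      have hr2 : ContinuousAt (fun u => (1 - s u ^ 2) ^ (a / 2)) t :=
        hbase.rpow_const (Or.inl (ne_of_gt hst))
      have hr3 : ContinuousAt (fun u => (1 - s u ^ 2) ^ (a / 2 - 1)) t :=
        hbase.rpow_const (Or.inl (ne_of_gt hst))
      have hdv : ContinuousAt (fun u => deriv V (s u)) t :=
        (hdV.continuousAt (isOpen_Ioo.mem_nhds hsm)).comp hsc
      have hvv : ContinuousAt (fun u => V (s u)) t :=
        (hV2.continuousOn.continuousAt (isOpen_Ioo.mem_nhds hsm)).comp hsc
      have hq : ContinuousAt (fun u => deriv V (s u) / V (s u)) t :=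
        hdv.div hvv (ne_of_gt (hVpos _ hsm))
      simp only [hCf, hc]
      exact ((continuousAt_const.mul hyc).mul hr1).add
          (((continuousAt_const.mul hq).mul hwc).mul hr2) |>.sub
        ((((continuousAt_const.mul hsc).div_const lam).mul hwc).mul hr3)
    rcases le_total σ₀ σ with hle | hle
    · have hsub : Set.Icc σ₀ σ ⊆ I := hI.out hσ₀ hσ
      obtain ⟨K, hK⟩ := IsCompact.exists_bound_of_continuousOn isCompact_Icc
        (fun t ht => (hCcont t (hsub ht)).continuousWithinAt)
      exact gron_zero g Cf σ₀ σ K (fun t ht => hderiv t (hsub ht))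
        (fun t ht => hK t ht) h0 σ ⟨hle, le_refl σ⟩
    · have hsub : Set.Icc σ σ₀ ⊆ I := hI.out hσ hσ₀
      obtain ⟨K, hK⟩ := IsCompact.exists_bound_of_continuousOn isCompact_Icc
        (fun t ht => (hCcont t (hsub ht)).continuousWithinAt)
      exact gron_zero' g Cf σ σ₀ K (fun t ht => hderiv t (hsub ht))
        (fun t ht => hK t ht) h0 σ ⟨le_refl σ, hle⟩
  · -- on M : F1 = -(a/2-1) w² ≤ 0
    intro y w s hsm hG0
    rw [hG] at hG0
    have hkey : (1 - s ^ 2) ^ a * (U s - y ^ 2 / 2) = w ^ 2 / 2 := by linarith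
    have h1 : F1 y s w = -(a / 2 - 1) * w ^ 2 := by
      rw [hF1]; linear_combination (b - a) * hkey
    refine ⟨h1, ?_⟩
    rw [h1]
    nlinarith [sq_nonneg w]
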